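/- Let V be a real inner product space of finite dimension n ≥ 4, let R be an algebraic curvature tensor on V, let {e₁,…,e_n} be an orthonormal basis of V, and let S₀ = (1/(n(n−1)))·Σ_{i,j=1}^{n} R(e_i,e_j,e_i,e_j) be the normalized scalar curvature of R. Define γ_n = n(n−1)/(n²−n−6) if n = 4 or n ≥ 6, and γ₅ = 20/17. If for every orthonormal four-frame {f₁,f₂,f₃,f₄} in V one has R(f₁,f₂,f₁,f₂) + R(f₃,f₄,f₃,f₄) < 2γ_n·S₀, then for every orthonormal four-frame {f₁,f₂,f₃,f₄} in V one has R(f₁,f₃,f₁,f₃) + R(f₁,f₄,f₁,f₄) + R(f₂,f₃,f₂,f₃) + R(f₂,f₄,f₂,f₄) > (1/2)·(R(f₁,f₂,f₁,f₂) + R(f₃,f₄,f₃,f₄)). -/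

import Mathlib

set_option maxHeartbeats 1000000


open scoped RealInnerProductSpace

variable {V : Type*} [NormedAddCommGroup V] [InnerProductSpace ℝ V]

/-- An algebraic curvature tensor on a real inner product space `V`:
an `ℝ`-multilinear map `V × V × V × V → ℝ` with the standard symmetries and
the first Bianchi identity. -/
def IsCurvatureTensor (R : V →ₗ[ℝ] V →ₗ[ℝ] V →ₗ[ℝ] V →ₗ[ℝ] ℝ) : Prop :=
  (∀ X Y Z W : V, R X Y Z W = - R Y X Z W) ∧
  (∀ X Y Z W : V, R X Y Z W = - R X Y W Z) ∧
  (∀ X Y Z W : V, R X Y Z W = R Z W X Y) ∧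
  (∀ X Y Z W : V, R X Y Z W + R X Z W Y + R X W Y Z = 0)

/-- An orthonormal four-frame: four pairwise orthogonal unit vectors. -/
def OrthonormalFrame4 (e₁ e₂ e₃ e₄ : V) : Prop :=
  ‖e₁‖ = 1 ∧ ‖e₂‖ = 1 ∧ ‖e₃‖ = 1 ∧ ‖e₄‖ = 1 ∧
  ⟪e₁, e₂⟫ = 0 ∧ ⟪e₁, e₃⟫ = 0 ∧ ⟪e₁, e₄⟫ = 0 ∧
  ⟪e₂, e₃⟫ = 0 ∧ ⟪e₂, e₄⟫ = 0 ∧ ⟪e₃, e₄⟫ = 0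

private lemma key_ineq (n : ℕ) (hn : 4 ≤ n) (K : Fin n → Fin n → ℝ)
    (hKsym : ∀ i j, K i j = K j i) (hKdiag : ∀ i, K i i = 0)
    (i0 i1 i2 i3 : Fin n)
    (h01 : i0 ≠ i1) (h02 : i0 ≠ i2) (h03 : i0 ≠ i3)
    (h12 : i1 ≠ i2) (h13 : i1 ≠ i3) (h23 : i2 ≠ i3)
    (σ T : ℝ) (hT : T = ∑ i, ∑ j, K i j)
    (hσ4 : n ≠ 5 → σ * ((n : ℝ) ^ 2 - (n : ℝ) - 6) = 2 * T)
    (hσ5 : n = 5 → 17 * σ = 2 * T)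
    (hcon : ∀ i j k l : Fin n, i ≠ j → i ≠ k → i ≠ l → j ≠ k → j ≠ l → k ≠ l →
      K i j + K k l < σ) :
    1 / 2 * (K i0 i1 + K i2 i3) < K i0 i2 + K i0 i3 + K i1 i2 + K i1 i3 := by
  classical
  set F : Finset (Fin n) := {i0, i1, i2, i3} with hF
  set O : Finset (Fin n) := Finset.univ \ F with hO
  have hm0 : i0 ∈ F := by simp [hF]
  have hm1 : i1 ∈ F := by simp [hF]
  have hm2 : i2 ∈ F := by simp [hF]
  have hm3 : i3 ∈ F := by simp [hF]
  have hFsum : ∀ g : Fin n → ℝ, ∑ j ∈ F, g j = g i0 + g i1 + g i2 + g i3 := by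
    intro g
    rw [hF, Finset.sum_insert (by simp [h01, h02, h03]),
      Finset.sum_insert (by simp [h12, h13]), Finset.sum_insert (by simp [h23]),
      Finset.sum_singleton]
    ring
  have hcardF : F.card = 4 := by
    rw [hF, Finset.card_insert_of_notMem (by simp [h01, h02, h03]),
      Finset.card_insert_of_notMem (by simp [h12, h13]),
      Finset.card_insert_of_notMem (by simp [h23]), Finset.card_singleton]
  have hcardO : O.card = n - 4 := by
    rw [hO, Finset.card_sdiff_of_subset (Finset.subset_univ F), Finset.card_univ,
      Fintype.card_fin, hcardF]
  -- row sums into O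
  set U : Fin n → ℝ := fun a => ∑ x ∈ O, K a x with hU
  set Vv : Fin n → ℝ := fun x => ∑ y ∈ O.erase x, K x y with hVv
  set W : ℝ := ∑ x ∈ O, Vv x with hW
  have hOF : ∀ x ∈ O, ∀ a ∈ F, x ≠ a := by
    intro x hx a ha h
    rw [hO, Finset.mem_sdiff] at hx
    exact hx.2 (h ▸ ha)
  -- decomposition of the full double sum
  have hTd : T = 2 * (K i0 i1 + K i2 i3)
      + 2 * (K i0 i2 + K i0 i3 + K i1 i2 + K i1 i3)
      + 2 * (U i0 + U i1 + U i2 + U i3) + W := by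
    have split_univ : ∀ g : Fin n → ℝ,
        ∑ i, g i = ∑ x ∈ O, g x + ∑ i ∈ F, g i := by
      intro g; rw [hO]; exact (Finset.sum_sdiff (Finset.subset_univ F)).symm
    have row_split : ∀ i : Fin n, ∑ j, K i j = U i + ∑ j ∈ F, K i j := by
      intro i; rw [split_univ (fun j => K i j), hU]
    have hOO : ∑ x ∈ O, U x = W := by
      rw [hU, hW]
      refine Finset.sum_congr rfl fun x hx => ?_
      show (∑ y ∈ O, K x y) = ∑ y ∈ O.erase x, K x y
      rw [← Finset.sum_erase_add O _ hx, hKdiag, add_zero]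
    have hcol : ∀ a : Fin n, ∑ x ∈ O, K x a = U a := by
      intro a; rw [hU]; exact Finset.sum_congr rfl fun x _ => hKsym x a
    calc T = ∑ i, ∑ j, K i j := hT
      _ = ∑ x ∈ O, (U x + ∑ j ∈ F, K x j) + ∑ i ∈ F, (U i + ∑ j ∈ F, K i j) := by
          rw [split_univ (fun i => ∑ j, K i j)]
          congr 1 <;> exact Finset.sum_congr rfl fun i _ => row_split i
      _ = (∑ x ∈ O, U x + ∑ x ∈ O, (K x i0 + K x i1 + K x i2 + K x i3))
          + (∑ i ∈ F, U i + ∑ i ∈ F, ∑ j ∈ F, K i j) := by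
          rw [Finset.sum_add_distrib, Finset.sum_add_distrib]
          congr 1
          congr 1
          exact Finset.sum_congr rfl fun x _ => hFsum (fun j => K x j)
      _ = (W + (U i0 + U i1 + U i2 + U i3))
          + ((U i0 + U i1 + U i2 + U i3) + ∑ i ∈ F, ∑ j ∈ F, K i j) := by
          rw [hOO, Finset.sum_add_distrib, Finset.sum_add_distrib,
            Finset.sum_add_distrib, hcol, hcol, hcol, hcol,
            hFsum (fun i => U i)]
      _ = 2 * (K i0 i1 + K i2 i3)
          + 2 * (K i0 i2 + K i0 i3 + K i1 i2 + K i1 i3)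
          + 2 * (U i0 + U i1 + U i2 + U i3) + W := by
          rw [hFsum (fun i => ∑ j ∈ F, K i j), hFsum (fun j => K i0 j),
            hFsum (fun j => K i1 j), hFsum (fun j => K i2 j),
            hFsum (fun j => K i3 j), hKdiag, hKdiag, hKdiag, hKdiag,
            hKsym i1 i0, hKsym i2 i0, hKsym i2 i1, hKsym i3 i0, hKsym i3 i1,
            hKsym i3 i2]
          ring
  -- reduce the goal to τ < T
  have hP : K i0 i1 + K i2 i3 < σ := hcon i0 i1 i2 i3 h01 h02 h03 h12 h13 h23
  suffices hτ : 3 * (K i0 i1 + K i2 i3) + 2 * (U i0 + U i1 + U i2 + U i3) + W < T by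
    linarith
  rcases (by omega : n = 4 ∨ n = 5 ∨ 6 ≤ n) with h4 | h5 | h6
  · -- n = 4 : O is empty
    have hO4 : O = ∅ := Finset.card_eq_zero.mp (by omega)
    have hU4 : ∀ a : Fin n, U a = 0 := by
      intro a; show (∑ x ∈ O, K a x) = 0; rw [hO4, Finset.sum_empty]
    have hW4 : W = 0 := by
      show (∑ x ∈ O, Vv x) = 0; rw [hO4, Finset.sum_empty]
    have hσ : σ * ((n : ℝ) ^ 2 - (n : ℝ) - 6) = 2 * T := hσ4 (by omega)
    rw [h4] at hσ; norm_num at hσ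
    rw [hU4, hU4, hU4, hU4, hW4]
    linarith
  · -- n = 5 : O is a singleton
    have hx4 : ∃ x4, O = {x4} := Finset.card_eq_one.mp (by omega)
    obtain ⟨x4, hOeq⟩ := hx4
    have hx4O : x4 ∈ O := by rw [hOeq]; exact Finset.mem_singleton_self x4
    have ne0 : x4 ≠ i0 := hOF x4 hx4O i0 hm0
    have ne1 : x4 ≠ i1 := hOF x4 hx4O i1 hm1
    have ne2 : x4 ≠ i2 := hOF x4 hx4O i2 hm2
    have ne3 : x4 ≠ i3 := hOF x4 hx4O i3 hm3
    have hUe : ∀ a : Fin n, U a = K a x4 := by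
      intro a; show (∑ x ∈ O, K a x) = K a x4; rw [hOeq, Finset.sum_singleton]
    have hW5 : W = 0 := by
      show (∑ x ∈ O, Vv x) = 0
      rw [hOeq, Finset.sum_singleton]
      show (∑ y ∈ O.erase x4, K x4 y) = 0
      rw [hOeq, Finset.erase_singleton, Finset.sum_empty]
    have hσ : 17 * σ = 2 * T := hσ5 h5
    have A1 : K i0 i1 + K i2 x4 < σ := hcon _ _ _ _ h01 h02 (Ne.symm ne0) h12 (Ne.symm ne1) (Ne.symm ne2)
    have A2 : K i0 i1 + K i3 x4 < σ := hcon _ _ _ _ h01 h03 (Ne.symm ne0) h13 (Ne.symm ne1) (Ne.symm ne3)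
    have A3 : K i2 i3 + K i0 x4 < σ := hcon _ _ _ _ h23 (Ne.symm h02) (Ne.symm ne2) (Ne.symm h03) (Ne.symm ne3) (Ne.symm ne0)
    have A4 : K i2 i3 + K i1 x4 < σ := hcon _ _ _ _ h23 (Ne.symm h12) (Ne.symm ne2) (Ne.symm h13) (Ne.symm ne3) (Ne.symm ne1)
    have D1 : K i0 x4 + K i1 i2 < σ := hcon _ _ _ _ (Ne.symm ne0) h01 h02 ne1 ne2 h12
    have D2 : K i0 x4 + K i1 i3 < σ := hcon _ _ _ _ (Ne.symm ne0) h01 h03 ne1 ne3 h13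
    have D3 : K i1 x4 + K i0 i2 < σ := hcon _ _ _ _ (Ne.symm ne1) (Ne.symm h01) h12 ne0 ne2 h02
    have D4 : K i1 x4 + K i0 i3 < σ := hcon _ _ _ _ (Ne.symm ne1) (Ne.symm h01) h13 ne0 ne3 h03
    have D5 : K i2 x4 + K i0 i3 < σ := hcon _ _ _ _ (Ne.symm ne2) (Ne.symm h02) h23 ne0 ne3 h03
    have D6 : K i2 x4 + K i1 i3 < σ := hcon _ _ _ _ (Ne.symm ne2) (Ne.symm h12) h23 ne1 ne3 h13
    have D7 : K i3 x4 + K i0 i2 < σ := hcon _ _ _ _ (Ne.symm ne3) (Ne.symm h03) (Ne.symm h23) ne0 ne2 h02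
    have D8 : K i3 x4 + K i1 i2 < σ := hcon _ _ _ _ (Ne.symm ne3) (Ne.symm h13) (Ne.symm h23) ne1 ne2 h12
    linarith [hTd, hUe i0, hUe i1, hUe i2, hUe i3, hW5, hσ, hP,
      A1, A2, A3, A4, D1, D2, D3, D4, D5, D6, D7, D8]
  · -- 6 ≤ n
    have hcO : (O.card : ℝ) = (n : ℝ) - 4 := by
      rw [hcardO, Nat.cast_sub (by omega)]; norm_num
    have hOne : O.Nonempty := Finset.card_pos.mp (by omega)
    have hEcard : ∀ x ∈ O, ((O.erase x).card : ℝ) = (n : ℝ) - 5 := by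
      intro x hx
      rw [Finset.card_erase_of_mem hx, hcardO, show n - 4 - 1 = n - 5 from by omega,
        Nat.cast_sub (by omega)]
      norm_num
    have hEne : ∀ x ∈ O, (O.erase x).Nonempty := by
      intro x hx
      apply Finset.card_pos.mp
      rw [Finset.card_erase_of_mem hx, hcardO]; omega
    have hn5pos : (0:ℝ) ≤ (n:ℝ) - 5 := by
      have : (6:ℝ) ≤ (n:ℝ) := by exact_mod_cast h6
      linarith
    have hUab : ∀ a b : Fin n, a ∈ F → b ∈ F → a ≠ b → U a + U b < ((n:ℝ)-4) * σ := by
      intro a b ha hb hab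
      have big : ∑ x ∈ O, ∑ y ∈ O.erase x, (K a x + K b y)
          < ∑ x ∈ O, (((n:ℝ)-5) * σ) := by
        apply Finset.sum_lt_sum_of_nonempty hOne
        intro x hx
        calc ∑ y ∈ O.erase x, (K a x + K b y) < ∑ y ∈ O.erase x, σ := by
              apply Finset.sum_lt_sum_of_nonempty (hEne x hx)
              intro y hy
              have hyO : y ∈ O := Finset.mem_of_mem_erase hy
              have hyx : y ≠ x := Finset.ne_of_mem_erase hy
              exact hcon a x b y (Ne.symm (hOF x hx a ha)) hab (Ne.symm (hOF y hyO a ha))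
                (hOF x hx b hb) (Ne.symm hyx) (Ne.symm (hOF y hyO b hb))
          _ = ((n:ℝ)-5) * σ := by rw [Finset.sum_const, nsmul_eq_mul, hEcard x hx]
      have e1 : ∀ x ∈ O, ∑ y ∈ O.erase x, (K a x + K b y)
          = ((n:ℝ)-5) * K a x + (U b - K b x) := by
        intro x hx
        rw [Finset.sum_add_distrib, Finset.sum_const, nsmul_eq_mul, hEcard x hx,
          Finset.sum_erase_eq_sub hx]
      rw [Finset.sum_congr rfl e1, Finset.sum_add_distrib, ← Finset.mul_sum,
        Finset.sum_sub_distrib, Finset.sum_const, nsmul_eq_mul, hcO,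
        Finset.sum_const, nsmul_eq_mul, hcO] at big
      -- big : (n-5) * U a + ((n-4) * U b - U b) < (n-4) * ((n-5) * σ)
      have big2 : ((n:ℝ)-5) * (U a + U b) < ((n:ℝ)-5) * (((n:ℝ)-4) * σ) := by
        show ((n:ℝ)-5) * (U a + U b) < ((n:ℝ)-5) * (((n:ℝ)-4) * σ)
        nlinarith [big]
      exact lt_of_mul_lt_mul_left big2 hn5pos
    have hU01 : U i0 + U i1 < ((n:ℝ)-4) * σ := hUab i0 i1 hm0 hm1 h01
    have hU23 : U i2 + U i3 < ((n:ℝ)-4) * σ := hUab i2 i3 hm2 hm3 h23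
    -- bound combining the special pairs with an outside pair
    have hPW : ((n:ℝ)-4) * (((n:ℝ)-5) * (K i0 i1 + K i2 i3)) + 2 * W
        < ((n:ℝ)-4) * (((n:ℝ)-5) * (2*σ)) := by
      have big : ∑ x ∈ O, ∑ y ∈ O.erase x, ((K i0 i1 + K i2 i3) + 2 * K x y)
          < ∑ x ∈ O, (((n:ℝ)-5) * (2*σ)) := by
        apply Finset.sum_lt_sum_of_nonempty hOne
        intro x hx
        calc ∑ y ∈ O.erase x, ((K i0 i1 + K i2 i3) + 2*K x y)
            < ∑ y ∈ O.erase x, (2*σ) := by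
              apply Finset.sum_lt_sum_of_nonempty (hEne x hx)
              intro y hy
              have hyO : y ∈ O := Finset.mem_of_mem_erase hy
              have hyx : y ≠ x := Finset.ne_of_mem_erase hy
              have c1 : K i0 i1 + K x y < σ := hcon _ _ _ _ h01
                (Ne.symm (hOF x hx i0 hm0)) (Ne.symm (hOF y hyO i0 hm0))
                (Ne.symm (hOF x hx i1 hm1)) (Ne.symm (hOF y hyO i1 hm1)) (Ne.symm hyx)
              have c2 : K i2 i3 + K x y < σ := hcon _ _ _ _ h23
                (Ne.symm (hOF x hx i2 hm2)) (Ne.symm (hOF y hyO i2 hm2))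
                (Ne.symm (hOF x hx i3 hm3)) (Ne.symm (hOF y hyO i3 hm3)) (Ne.symm hyx)
              linarith
          _ = ((n:ℝ)-5)*(2*σ) := by rw [Finset.sum_const, nsmul_eq_mul, hEcard x hx]
      have e1 : ∀ x ∈ O, ∑ y ∈ O.erase x, ((K i0 i1 + K i2 i3) + 2*K x y)
          = ((n:ℝ)-5) * (K i0 i1 + K i2 i3) + 2 * Vv x := by
        intro x hx
        rw [Finset.sum_add_distrib, Finset.sum_const, nsmul_eq_mul, hEcard x hx,
          ← Finset.mul_sum]
      rw [Finset.sum_congr rfl e1, Finset.sum_add_distrib, Finset.sum_const,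
        nsmul_eq_mul, hcO, ← Finset.mul_sum, Finset.sum_const, nsmul_eq_mul, hcO] at big
      exact big
    have hWraw : (∑ z ∈ O, ∑ w ∈ O.erase z, K z w) = W := rfl
    have hVraw : ∀ x : Fin n, (∑ w ∈ O.erase x, K x w) = Vv x := fun _ => rfl
    rcases (by omega : n = 6 ∨ n = 7 ∨ 8 ≤ n) with h6' | h7 | h8
    · -- n = 6
      have hσ : σ * ((n : ℝ) ^ 2 - (n : ℝ) - 6) = 2 * T := hσ4 (by omega)
      rw [h6'] at hσ hU01 hU23 hPW
      norm_num at hσ hU01 hU23 hPW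
      linarith [hTd, hP, hU01, hU23, hPW, hσ]
    · -- n = 7
      have hσ : σ * ((n : ℝ) ^ 2 - (n : ℝ) - 6) = 2 * T := hσ4 (by omega)
      rw [h7] at hσ hU01 hU23 hPW
      norm_num at hσ hU01 hU23 hPW
      linarith [hTd, hP, hU01, hU23, hPW, hσ]
    · -- 8 ≤ n
      have hσ : σ * ((n : ℝ) ^ 2 - (n : ℝ) - 6) = 2 * T := hσ4 (by omega)
      have h8r : (8:ℝ) ≤ (n:ℝ) := by exact_mod_cast h8
      have hcard2 : ∀ x ∈ O, ∀ y ∈ O.erase x, ((O.erase x).erase y).card = n - 6 := by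
        intro x hx y hy
        rw [Finset.card_erase_of_mem hy, Finset.card_erase_of_mem hx, hcardO]
        omega
      have hcard2R : ∀ x ∈ O, ∀ y ∈ O.erase x,
          (((O.erase x).erase y).card : ℝ) = (n:ℝ) - 6 := by
        intro x hx y hy
        rw [hcard2 x hx y hy, Nat.cast_sub (by omega)]; norm_num
      have h2ne : ∀ x ∈ O, ∀ y ∈ O.erase x, ((O.erase x).erase y).Nonempty := by
        intro x hx y hy
        apply Finset.card_pos.mp; rw [hcard2 x hx y hy]; omega
      have hcard3R : ∀ x ∈ O, ∀ y ∈ O.erase x, ∀ z ∈ (O.erase x).erase y,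
          ((((O.erase x).erase y).erase z).card : ℝ) = (n:ℝ) - 7 := by
        intro x hx y hy z hz
        rw [Finset.card_erase_of_mem hz, hcard2 x hx y hy,
          show n - 6 - 1 = n - 7 from by omega, Nat.cast_sub (by omega)]
        norm_num
      have h3ne : ∀ x ∈ O, ∀ y ∈ O.erase x, ∀ z ∈ (O.erase x).erase y,
          (((O.erase x).erase y).erase z).Nonempty := by
        intro x hx y hy z hz
        apply Finset.card_pos.mp
        rw [Finset.card_erase_of_mem hz, hcard2 x hx y hy]; omega
      -- peeling one element off the double sum over a finset
      have SSer : ∀ (t : Finset (Fin n)) (a : Fin n), a ∈ t →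
          (∑ z ∈ t.erase a, ∑ w ∈ (t.erase a).erase z, K z w)
          = (∑ z ∈ t, ∑ w ∈ t.erase z, K z w) - 2 * ∑ w ∈ t.erase a, K a w := by
        intro t a ha
        have h2 : ∀ z ∈ t.erase a, (∑ w ∈ (t.erase a).erase z, K z w)
            = (∑ w ∈ t.erase z, K z w) - K z a := by
          intro z hz
          have hza : z ≠ a := Finset.ne_of_mem_erase hz
          have haz : a ∈ t.erase z := Finset.mem_erase.mpr ⟨hza.symm, ha⟩
          rw [Finset.erase_right_comm, Finset.sum_erase_eq_sub haz]
        rw [Finset.sum_congr rfl h2, Finset.sum_sub_distrib]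
        have h3 : ∑ z ∈ t.erase a, K z a = ∑ w ∈ t.erase a, K a w :=
          Finset.sum_congr rfl fun z _ => hKsym z a
        rw [h3, Finset.sum_erase_eq_sub ha]
        ring
      have hSS2 : ∀ x ∈ O, ∀ y ∈ O.erase x,
          (∑ z ∈ (O.erase x).erase y, ∑ w ∈ ((O.erase x).erase y).erase z, K z w)
          = W - 2 * Vv x - 2 * Vv y + 2 * K x y := by
        intro x hx y hy
        have hxy : x ≠ y := (Finset.ne_of_mem_erase hy).symm
        have hxOy : x ∈ O.erase y := Finset.mem_erase.mpr ⟨hxy, hx⟩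
        rw [SSer (O.erase x) y hy, SSer O x hx, hWraw, hVraw x]
        have h5 : (∑ w ∈ (O.erase x).erase y, K y w) = Vv y - K y x := by
          rw [Finset.erase_right_comm, Finset.sum_erase_eq_sub hxOy, hVraw y]
        rw [h5, hKsym y x]
        ring
      -- pointwise bound for each outside ordered pair
      have hlt : ∀ x ∈ O, ∀ y ∈ O.erase x,
          ((n:ℝ)-7) * (((n:ℝ)-8) * Vv x) + ((n:ℝ)-7) * W
            - (((n:ℝ)-7) * (((n:ℝ)-8) * Vv x) + ((n:ℝ)-7) * W)
          = 0 := by intro x hx y hy; ring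
      have hinner : ∀ x ∈ O, ∀ y ∈ O.erase x,
          (∑ z ∈ (O.erase x).erase y, ∑ w ∈ ((O.erase x).erase y).erase z,
            (K x y + K z w))
          = (((n:ℝ)-6) * ((n:ℝ)-7) + 2) * K x y + (W - 2 * Vv x - 2 * Vv y) := by
        intro x hx y hy
        have e1 : ∀ z ∈ (O.erase x).erase y,
            (∑ w ∈ ((O.erase x).erase y).erase z, (K x y + K z w))
            = ((n:ℝ)-7) * K x y + ∑ w ∈ ((O.erase x).erase y).erase z, K z w := by
          intro z hz
          rw [Finset.sum_add_distrib, Finset.sum_const, nsmul_eq_mul,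
            hcard3R x hx y hy z hz]
        rw [Finset.sum_congr rfl e1, Finset.sum_add_distrib, ← Finset.mul_sum,
          Finset.sum_const, nsmul_eq_mul, hcard2R x hx y hy, hSS2 x hx y hy]
        ring
      have hptlt : ∀ x ∈ O, ∀ y ∈ O.erase x,
          (((n:ℝ)-6) * ((n:ℝ)-7) + 2) * K x y + (W - 2 * Vv x - 2 * Vv y)
          < ((n:ℝ)-6) * (((n:ℝ)-7) * σ) := by
        intro x hx y hy
        rw [← hinner x hx y hy]
        have hxy : x ≠ y := (Finset.ne_of_mem_erase hy).symm
        calc (∑ z ∈ (O.erase x).erase y, ∑ w ∈ ((O.erase x).erase y).erase z,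
              (K x y + K z w))
            < ∑ z ∈ (O.erase x).erase y, (((n:ℝ)-7) * σ) := by
              apply Finset.sum_lt_sum_of_nonempty (h2ne x hx y hy)
              intro z hz
              have hzy : z ≠ y := Finset.ne_of_mem_erase hz
              have hzx : z ≠ x := Finset.ne_of_mem_erase (Finset.mem_of_mem_erase hz)
              calc (∑ w ∈ ((O.erase x).erase y).erase z, (K x y + K z w))
                  < ∑ w ∈ ((O.erase x).erase y).erase z, σ := by
                    apply Finset.sum_lt_sum_of_nonempty (h3ne x hx y hy z hz)
                    intro w hw
                    have hwz : w ≠ z := Finset.ne_of_mem_erase hw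
                    have hwy : w ≠ y := Finset.ne_of_mem_erase (Finset.mem_of_mem_erase hw)
                    have hwx : w ≠ x := Finset.ne_of_mem_erase
                      (Finset.mem_of_mem_erase (Finset.mem_of_mem_erase hw))
                    exact hcon x y z w hxy hzx.symm hwx.symm hzy.symm hwy.symm hwz.symm
                _ = ((n:ℝ)-7) * σ := by
                    rw [Finset.sum_const, nsmul_eq_mul, hcard3R x hx y hy z hz]
          _ = ((n:ℝ)-6) * (((n:ℝ)-7) * σ) := by
              rw [Finset.sum_const, nsmul_eq_mul, hcard2R x hx y hy]
      -- sum the pointwise bounds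
      have hbig : ∑ x ∈ O, ∑ y ∈ O.erase x,
            ((((n:ℝ)-6) * ((n:ℝ)-7) + 2) * K x y + (W - 2 * Vv x - 2 * Vv y))
          < ∑ x ∈ O, (((n:ℝ)-5) * (((n:ℝ)-6) * (((n:ℝ)-7) * σ))) := by
        apply Finset.sum_lt_sum_of_nonempty hOne
        intro x hx
        calc (∑ y ∈ O.erase x,
              ((((n:ℝ)-6) * ((n:ℝ)-7) + 2) * K x y + (W - 2 * Vv x - 2 * Vv y)))
            < ∑ y ∈ O.erase x, (((n:ℝ)-6) * (((n:ℝ)-7) * σ)) :=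
              Finset.sum_lt_sum_of_nonempty (hEne x hx) (hptlt x hx)
          _ = ((n:ℝ)-5) * (((n:ℝ)-6) * (((n:ℝ)-7) * σ)) := by
              rw [Finset.sum_const, nsmul_eq_mul, hEcard x hx]
      -- evaluate the left-hand side
      have e2 : ∀ x ∈ O, (∑ y ∈ O.erase x,
            ((((n:ℝ)-6) * ((n:ℝ)-7) + 2) * K x y + (W - 2 * Vv x - 2 * Vv y)))
          = ((((n:ℝ)-6) * ((n:ℝ)-7) + 2) * Vv x
            + (((n:ℝ)-5) * (W - 2 * Vv x) - 2 * (W - Vv x))) := by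
        intro x hx
        have e2a : ∀ y ∈ O.erase x,
            ((((n:ℝ)-6) * ((n:ℝ)-7) + 2) * K x y + (W - 2 * Vv x - 2 * Vv y))
            = ((((n:ℝ)-6) * ((n:ℝ)-7) + 2) * K x y + ((W - 2 * Vv x) - 2 * Vv y)) := by
          intro y hy; ring
        rw [Finset.sum_congr rfl e2a, Finset.sum_add_distrib, ← Finset.mul_sum,
          hVraw x, Finset.sum_sub_distrib, Finset.sum_const, nsmul_eq_mul,
          hEcard x hx, ← Finset.mul_sum, Finset.sum_erase_eq_sub hx, ← hW]
      have e3 : ∑ x ∈ O, ((((n:ℝ)-6) * ((n:ℝ)-7) + 2) * Vv x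
            + (((n:ℝ)-5) * (W - 2 * Vv x) - 2 * (W - Vv x)))
          = ∑ x ∈ O, ((((n:ℝ)-7) * ((n:ℝ)-8)) * Vv x + ((n:ℝ)-7) * W) := by
        refine Finset.sum_congr rfl fun x _ => ?_; ring
      rw [Finset.sum_congr rfl e2, e3, Finset.sum_add_distrib, ← Finset.mul_sum,
        ← hW, Finset.sum_const, nsmul_eq_mul, hcO, Finset.sum_const, nsmul_eq_mul,
        hcO] at hbig
      -- hbig : (n-7)(n-8) W + (n-4)((n-7) W) < (n-4)((n-5)((n-6)((n-7) σ)))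
      have hfac : (0:ℝ) ≤ ((n:ℝ)-6) * ((n:ℝ)-7) :=
        mul_nonneg (by linarith) (by linarith)
      have hmul : (((n:ℝ)-6) * ((n:ℝ)-7)) * (2 * W)
          < (((n:ℝ)-6) * ((n:ℝ)-7)) * (((n:ℝ)-4) * (((n:ℝ)-5) * σ)) := by
        nlinarith [hbig]
      have hW2 : 2 * W < ((n:ℝ)-4) * (((n:ℝ)-5) * σ) :=
        lt_of_mul_lt_mul_left hmul hfac
      linarith [hTd, hP, hU01, hU23, hW2, hσ]

lemma bilin_trace_indep {n : ℕ} (B : V →ₗ[ℝ] V →ₗ[ℝ] ℝ)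
    (c d : OrthonormalBasis (Fin n) ℝ V) :
    ∑ i, B (c i) (c i) = ∑ i, B (d i) (d i) := by
  have expand : ∀ i, B (c i) (c i)
      = ∑ p, ∑ q, ⟪d p, c i⟫ * (⟪d q, c i⟫ * B (d p) (d q)) := by
    intro i
    conv_lhs => rw [← d.sum_repr' (c i)]
    simp only [map_sum, LinearMap.sum_apply, LinearMap.map_smul, LinearMap.smul_apply,
      smul_eq_mul, Finset.mul_sum]
    rw [Finset.sum_comm]
  calc ∑ i, B (c i) (c i)
      = ∑ i, ∑ p, ∑ q, ⟪d p, c i⟫ * (⟪d q, c i⟫ * B (d p) (d q)) := by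
        exact Finset.sum_congr rfl fun i _ => expand i
    _ = ∑ p, ∑ q, (∑ i, ⟪d p, c i⟫ * ⟪c i, d q⟫) * B (d p) (d q) := by
        rw [Finset.sum_comm]
        refine Finset.sum_congr rfl fun p _ => ?_
        rw [Finset.sum_comm]
        refine Finset.sum_congr rfl fun q _ => ?_
        rw [Finset.sum_mul]
        refine Finset.sum_congr rfl fun i _ => ?_
        rw [real_inner_comm (c i) (d q)]; ring
    _ = ∑ p, ∑ q, (if p = q then (1:ℝ) else 0) * B (d p) (d q) := by
        refine Finset.sum_congr rfl fun p _ => Finset.sum_congr rfl fun q _ => ?_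
        rw [c.sum_inner_mul_inner, orthonormal_iff_ite.mp d.orthonormal]
    _ = ∑ i, B (d i) (d i) := by
        refine Finset.sum_congr rfl fun p _ => ?_
        simp only [ite_mul, one_mul, zero_mul]
        rw [Finset.sum_ite_eq (Finset.univ) p (fun q => B (d p) (d q))]
        simp

/-- `X, Y ↦ R X v Y v` as a bilinear map. -/
noncomputable def curvB1 (R : V →ₗ[ℝ] V →ₗ[ℝ] V →ₗ[ℝ] V →ₗ[ℝ] ℝ) (v : V) :
    V →ₗ[ℝ] V →ₗ[ℝ] ℝ :=
  LinearMap.mk₂ ℝ (fun X Y => R X v Y v)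
    (by intros; simp [map_add, LinearMap.add_apply])
    (by intros; simp [map_smul, LinearMap.smul_apply])
    (by intros; simp [map_add, LinearMap.add_apply])
    (by intros; simp [map_smul, LinearMap.smul_apply])

/-- `X, Y ↦ R u X u Y` as a bilinear map. -/
noncomputable def curvB2 (R : V →ₗ[ℝ] V →ₗ[ℝ] V →ₗ[ℝ] V →ₗ[ℝ] ℝ) (u : V) :
    V →ₗ[ℝ] V →ₗ[ℝ] ℝ :=
  LinearMap.mk₂ ℝ (fun X Y => R u X u Y)
    (by intros; simp [map_add, LinearMap.add_apply])
    (by intros; simp [map_smul, LinearMap.smul_apply])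
    (by intros; simp [map_add, LinearMap.add_apply])
    (by intros; simp [map_smul, LinearMap.smul_apply])

lemma scalar_sum_indep {n : ℕ} (R : V →ₗ[ℝ] V →ₗ[ℝ] V →ₗ[ℝ] V →ₗ[ℝ] ℝ)
    (c d : OrthonormalBasis (Fin n) ℝ V) :
    ∑ i, ∑ j, R (c i) (c j) (c i) (c j) = ∑ i, ∑ j, R (d i) (d j) (d i) (d j) := by
  calc ∑ i, ∑ j, R (c i) (c j) (c i) (c j)
      = ∑ j, ∑ i, curvB1 R (c j) (c i) (c i) := by
        rw [Finset.sum_comm]; rfl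
    _ = ∑ j, ∑ p, R (d p) (c j) (d p) (c j) := by
        exact Finset.sum_congr rfl fun j _ => bilin_trace_indep (curvB1 R (c j)) c d
    _ = ∑ p, ∑ j, curvB2 R (d p) (c j) (c j) := by
        rw [Finset.sum_comm]; rfl
    _ = ∑ p, ∑ q, R (d p) (d q) (d p) (d q) := by
        exact Finset.sum_congr rfl fun p _ => bilin_trace_indep (curvB2 R (d p)) c d

theorem stmt_10 {V : Type*} [NormedAddCommGroup V] [InnerProductSpace ℝ V]
    (n : ℕ) (hn : 4 ≤ n) (b : OrthonormalBasis (Fin n) ℝ V)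
    (R : V →ₗ[ℝ] V →ₗ[ℝ] V →ₗ[ℝ] V →ₗ[ℝ] ℝ) (hR : IsCurvatureTensor R)
    (S₀ : ℝ) (hS₀ : S₀ = (1 / ((n : ℝ) * ((n : ℝ) - 1))) *
      ∑ i : Fin n, ∑ j : Fin n, R (b i) (b j) (b i) (b j))
    (γ : ℝ)
    (hγ : γ = if n = 5 then 20 / 17
      else (n : ℝ) * ((n : ℝ) - 1) / ((n : ℝ) ^ 2 - (n : ℝ) - 6))
    (hyp : ∀ f₁ f₂ f₃ f₄ : V, OrthonormalFrame4 f₁ f₂ f₃ f₄ →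
      R f₁ f₂ f₁ f₂ + R f₃ f₄ f₃ f₄ < 2 * γ * S₀) :
    ∀ f₁ f₂ f₃ f₄ : V, OrthonormalFrame4 f₁ f₂ f₃ f₄ →
      R f₁ f₃ f₁ f₃ + R f₁ f₄ f₁ f₄ + R f₂ f₃ f₂ f₃ + R f₂ f₄ f₂ f₄ >
        (1 / 2) * (R f₁ f₂ f₁ f₂ + R f₃ f₄ f₃ f₄) := by
  intro f₁ f₂ f₃ f₄ hf
  obtain ⟨hf1, hf2, hf3, hf4, g12, g13, g14, g23, g24, g34⟩ := hf
  haveI : FiniteDimensional ℝ V := Module.Finite.of_basis b.toBasis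
  have hext : ∃ c : OrthonormalBasis (Fin n) ℝ V,
      c ⟨0, by omega⟩ = f₁ ∧ c ⟨1, by omega⟩ = f₂ ∧ c ⟨2, by omega⟩ = f₃ ∧
        c ⟨3, by omega⟩ = f₄ := by
    set i0 : Fin n := ⟨0, by omega⟩ with hi0
    set i1 : Fin n := ⟨1, by omega⟩ with hi1
    set i2 : Fin n := ⟨2, by omega⟩ with hi2
    set i3 : Fin n := ⟨3, by omega⟩ with hi3
    have h01 : i0 ≠ i1 := by simp [hi0, hi1, Fin.ext_iff]
    have h02 : i0 ≠ i2 := by simp [hi0, hi2, Fin.ext_iff]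
    have h03 : i0 ≠ i3 := by simp [hi0, hi3, Fin.ext_iff]
    have h12 : i1 ≠ i2 := by simp [hi1, hi2, Fin.ext_iff]
    have h13 : i1 ≠ i3 := by simp [hi1, hi3, Fin.ext_iff]
    have h23 : i2 ≠ i3 := by simp [hi2, hi3, Fin.ext_iff]
    set v : Fin n → V := fun i =>
      if i = i0 then f₁ else if i = i1 then f₂ else if i = i2 then f₃ else
        if i = i3 then f₄ else 0 with hv
    set s : Set (Fin n) := {i0, i1, i2, i3} with hs
    have hmem : ∀ x ∈ s, x = i0 ∨ x = i1 ∨ x = i2 ∨ x = i3 := by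
      intro x hx; simpa [hs] using hx
    have h10 : i1 ≠ i0 := h01.symm
    have h20 : i2 ≠ i0 := h02.symm
    have h30 : i3 ≠ i0 := h03.symm
    have h21 : i2 ≠ i1 := h12.symm
    have h31 : i3 ≠ i1 := h13.symm
    have h32 : i3 ≠ i2 := h23.symm
    have hvi0 : v i0 = f₁ := by simp [hv]
    have hvi1 : v i1 = f₂ := by simp [hv, h10]
    have hvi2 : v i2 = f₃ := by
      simp [hv, h20, h21]
    have hvi3 : v i3 = f₄ := by
      simp [hv, h30, h31, h32]
    have hnorm : ∀ x ∈ s, ‖v x‖ = 1 := by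
      intro x hx
      rcases hmem x hx with h | h | h | h <;> subst h <;>
        simp only [hvi0, hvi1, hvi2, hvi3] <;> assumption
    have g21 : ⟪f₂, f₁⟫ = 0 := by rw [real_inner_comm]; exact g12
    have g31 : ⟪f₃, f₁⟫ = 0 := by rw [real_inner_comm]; exact g13
    have g41 : ⟪f₄, f₁⟫ = 0 := by rw [real_inner_comm]; exact g14
    have g32 : ⟪f₃, f₂⟫ = 0 := by rw [real_inner_comm]; exact g23
    have g42 : ⟪f₄, f₂⟫ = 0 := by rw [real_inner_comm]; exact g24
    have g43 : ⟪f₄, f₃⟫ = 0 := by rw [real_inner_comm]; exact g34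
    have hinnerv : ∀ x ∈ s, ∀ y ∈ s, x ≠ y → ⟪v x, v y⟫ = 0 := by
      intro x hx y hy hxy
      rcases hmem x hx with h | h | h | h <;>
        rcases hmem y hy with h' | h' | h' | h' <;> subst h <;> subst h' <;>
        simp only [hvi0, hvi1, hvi2, hvi3] <;>
        first
        | exact absurd rfl hxy
        | assumption
    have hv_on : Orthonormal ℝ (s.restrict v) := by
      constructor
      · rintro ⟨x, hx⟩; exact hnorm x hx
      · rintro ⟨x, hx⟩ ⟨y, hy⟩ hne
        exact hinnerv x hx y hy (fun h => hne (Subtype.ext h))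
    have hcard : Module.finrank ℝ V = Fintype.card (Fin n) := by
      rw [Module.finrank_eq_card_basis b.toBasis, Fintype.card_fin]
    obtain ⟨c, hc⟩ := hv_on.exists_orthonormalBasis_extension_of_card_eq hcard
    refine ⟨c, ?_, ?_, ?_, ?_⟩
    · rw [hc i0 (by simp [hs])]; exact hvi0
    · rw [hc i1 (by simp [hs])]; exact hvi1
    · rw [hc i2 (by simp [hs])]; exact hvi2
    · rw [hc i3 (by simp [hs])]; exact hvi3
  obtain ⟨c, hc0, hc1, hc2, hc3⟩ := hext
  have h01 : (⟨0, by omega⟩ : Fin n) ≠ ⟨1, by omega⟩ := by simp [Fin.ext_iff]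
  have h02 : (⟨0, by omega⟩ : Fin n) ≠ ⟨2, by omega⟩ := by simp [Fin.ext_iff]
  have h03 : (⟨0, by omega⟩ : Fin n) ≠ ⟨3, by omega⟩ := by simp [Fin.ext_iff]
  have h12 : (⟨1, by omega⟩ : Fin n) ≠ ⟨2, by omega⟩ := by simp [Fin.ext_iff]
  have h13 : (⟨1, by omega⟩ : Fin n) ≠ ⟨3, by omega⟩ := by simp [Fin.ext_iff]
  have h23 : (⟨2, by omega⟩ : Fin n) ≠ ⟨3, by omega⟩ := by simp [Fin.ext_iff]
  have hKsym : ∀ i j : Fin n,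
      R (c i) (c j) (c i) (c j) = R (c j) (c i) (c j) (c i) := by
    intro i j
    have e1 := hR.1 (c j) (c i) (c j) (c i)
    have e2 := hR.2.1 (c i) (c j) (c j) (c i)
    linarith
  have hKdiag : ∀ i : Fin n, R (c i) (c i) (c i) (c i) = 0 := by
    intro i; have := hR.1 (c i) (c i) (c i) (c i); linarith
  have hS₀T : S₀ = 1 / ((n : ℝ) * ((n : ℝ) - 1)) *
      ∑ i, ∑ j, R (c i) (c j) (c i) (c j) := by
    rw [hS₀]; congr 1; exact (scalar_sum_indep R b c)
  have hN4 : (4:ℝ) ≤ (n:ℝ) := by exact_mod_cast hn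
  have hσ4 : n ≠ 5 → (2 * γ * S₀) * ((n : ℝ) ^ 2 - (n : ℝ) - 6)
      = 2 * ∑ i, ∑ j, R (c i) (c j) (c i) (c j) := by
    intro h5
    rw [hγ, if_neg h5, hS₀T]
    have d1 : (n:ℝ) * ((n:ℝ) - 1) ≠ 0 := by nlinarith
    have d2 : (n:ℝ) ^ 2 - (n:ℝ) - 6 ≠ 0 := by nlinarith
    field_simp
    exact mul_div_cancel_left₀ _ (mul_ne_zero (by linarith) (by nlinarith))
  have hσ5 : n = 5 → 17 * (2 * γ * S₀)
      = 2 * ∑ i, ∑ j, R (c i) (c j) (c i) (c j) := by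
    intro h5
    rw [hγ, if_pos h5, hS₀T, show ((n:ℝ)) = 5 from by rw [h5]; norm_num]
    ring
  have hcon : ∀ i j k l : Fin n, i ≠ j → i ≠ k → i ≠ l → j ≠ k → j ≠ l → k ≠ l →
      R (c i) (c j) (c i) (c j) + R (c k) (c l) (c k) (c l) < 2 * γ * S₀ := by
    intro i j k l hij hik hil hjk hjl hkl
    exact hyp (c i) (c j) (c k) (c l)
      ⟨c.orthonormal.1 i, c.orthonormal.1 j, c.orthonormal.1 k, c.orthonormal.1 l,
        c.orthonormal.2 hij, c.orthonormal.2 hik, c.orthonormal.2 hil,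
        c.orthonormal.2 hjk, c.orthonormal.2 hjl, c.orthonormal.2 hkl⟩
  have key := key_ineq n hn (fun i j => R (c i) (c j) (c i) (c j)) hKsym hKdiag
    ⟨0, by omega⟩ ⟨1, by omega⟩ ⟨2, by omega⟩ ⟨3, by omega⟩
    h01 h02 h03 h12 h13 h23 (2 * γ * S₀)
    (∑ i, ∑ j, R (c i) (c j) (c i) (c j)) rfl hσ4 hσ5 hcon
  rw [hc0, hc1, hc2, hc3] at key
  exact key
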